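/- arXiv:1703.10816 — 2 statements merged into one kernel-verified Lean document; each statement's English description precedes it below -/
import Mathlib

section
/- Let G be a group acting irreducibly on a finite-dimensional real vector space W such that the image of G in GL(W) contains, in its closure up to positive scalars, a rank-one endomorphism (proximality). Then the commutant of G in End(W) is exactly the scalars ℝ·Id. -/
/-- If a group `G ⊆ GL(W)` acts irreducibly and proximally on a finite-dimensional real
vector space `W`, then the commutant of `G` in `End(W)` is exactly `ℝ·Id`. -/
theorem commutant_eq_scalars_of_proximal
    {W : Type*} [NormedAddCommGroup W] [NormedSpace ℝ W] [FiniteDimensional ℝ W]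
    [Nontrivial W]
    (G : Subgroup (W ≃ₗ[ℝ] W))
    -- irreducibility
    (hirr : ∀ U : Submodule ℝ W,
      (∀ g ∈ G, U.map (g : W →ₗ[ℝ] W) = U) → U = ⊥ ∨ U = ⊤)
    -- proximality: some rank-one endomorphism is a limit of positive multiples of
    -- elements of `G`
    (hprox : ∃ π : W →L[ℝ] W, Module.finrank ℝ (LinearMap.range (π : W →ₗ[ℝ] W)) = 1 ∧
      π ∈ closure {T : W →L[ℝ] W | ∃ g ∈ G, ∃ c : ℝ, 0 < c ∧
        T = c • LinearMap.toContinuousLinearMap (g : W →ₗ[ℝ] W)}) :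
    ∀ T : W →ₗ[ℝ] W, (∀ g ∈ G, T ∘ₗ (g : W →ₗ[ℝ] W) = (g : W →ₗ[ℝ] W) ∘ₗ T) →
      ∃ c : ℝ, T = c • LinearMap.id := by
  intro T hT
  obtain ⟨π, hrank, hclos⟩ := hprox
  set Tc := LinearMap.toContinuousLinearMap T with hTcdef
  have hTc : ∀ x : W, Tc x = T x := fun x => rfl
  -- T commutes with π
  have hcomm : Tc.comp π = π.comp Tc := by
    have hclosed : IsClosed {S : W →L[ℝ] W | Tc.comp S = S.comp Tc} :=
      isClosed_eq ((ContinuousLinearMap.compL ℝ W W W) Tc).continuous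
        ((ContinuousLinearMap.compL ℝ W W W).flip Tc).continuous
    refine closure_minimal ?_ hclosed hclos
    rintro S ⟨g, hg, c, hc, rfl⟩
    ext x
    have h := LinearMap.congr_fun (hT g hg) x
    simp only [LinearMap.comp_apply] at h
    simp only [ContinuousLinearMap.comp_apply, ContinuousLinearMap.coe_smul',
      Pi.smul_apply, hTc]
    rw [map_smul]
    exact congrArg (c • ·) h
  -- the range of π is spanned by a nonzero vector v, which is an eigenvector of T
  obtain ⟨v0, hv0, hspan⟩ := finrank_eq_one_iff'.mp hrank
  set v : W := (v0 : W) with hvdef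
  have hvne : v ≠ 0 := fun h => hv0 (Subtype.ext h)
  have hTv_mem : T v ∈ LinearMap.range (π : W →ₗ[ℝ] W) := by
    obtain ⟨u, hu⟩ := v0.property
    have h := DFunLike.congr_fun hcomm u
    simp only [ContinuousLinearMap.comp_apply] at h
    refine ⟨T u, ?_⟩
    have : (π : W →ₗ[ℝ] W) u = v := hu
    calc (π : W →ₗ[ℝ] W) (T u) = π (Tc u) := rfl
    _ = Tc (π u) := h.symm
    _ = T v := by rw [hTc]; exact congrArg T this
  obtain ⟨c, hc⟩ := hspan ⟨T v, hTv_mem⟩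
  have hTv : T v = c • v := by
    have := congrArg (Subtype.val) hc
    simpa using this.symm
  -- the kernel of T - c • id is G-invariant and nonzero
  set S : W →ₗ[ℝ] W := T - c • LinearMap.id with hSdef
  have hScomm : ∀ g ∈ G, ∀ x : W, S ((g : W →ₗ[ℝ] W) x) = (g : W →ₗ[ℝ] W) (S x) := by
    intro g hg x
    have h := LinearMap.congr_fun (hT g hg) x
    simp only [LinearMap.comp_apply] at h
    simp only [hSdef, LinearMap.sub_apply, LinearMap.smul_apply, LinearMap.id_apply, map_sub,
      map_smul]
    rw [h]
  set U : Submodule ℝ W := LinearMap.ker S with hUdef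
  have hUinv : ∀ g ∈ G, U.map (g : W →ₗ[ℝ] W) = U := by
    intro g hg
    apply le_antisymm
    · rintro _ ⟨x, hx, rfl⟩
      have hx' : S x = 0 := hx
      show S ((g : W →ₗ[ℝ] W) x) = 0
      rw [hScomm g hg x, hx', map_zero]
    · intro x hx
      have hx' : S x = 0 := hx
      refine ⟨(g⁻¹ : W ≃ₗ[ℝ] W) x, ?_, ?_⟩
      · show S ((g⁻¹ : W ≃ₗ[ℝ] W) x) = 0
        have := hScomm g⁻¹ (G.inv_mem hg) x
        simp only [LinearEquiv.coe_coe] at this ⊢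
        rw [this, hx', map_zero]
      · show (g : W →ₗ[ℝ] W) ((g⁻¹ : W ≃ₗ[ℝ] W) x) = x
        have hinv : (g⁻¹ : W ≃ₗ[ℝ] W) = g.symm := rfl
        simp [hinv]
  have hvU : v ∈ U := by
    show S v = 0
    simp [hSdef, hTv]
  have hUne : U ≠ ⊥ := by
    intro h
    rw [h] at hvU
    exact hvne (Submodule.mem_bot ℝ |>.mp hvU)
  have hUtop : U = ⊤ := (hirr U hUinv).resolve_left hUne
  refine ⟨c, ?_⟩
  ext x
  have hx : x ∈ U := hUtop ▸ Submodule.mem_top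
  have hx' : S x = 0 := hx
  have : T x - c • x = 0 := by simpa [hSdef] using hx'
  simp [sub_eq_zero.mp this]
end

section
/- Let ν be a Borel probability measure on the projective space ℙ(V) of a finite-dimensional real vector space V, invariant in the stationary sense under a measure μ on a group G ⊆ GL(V) (μ * ν = ν). Suppose the only proper nonzero G-invariant subspace of V is W, that ν(ℙ(W)) = 0, that μ is supported on a subgroup whose action permutes finite G-invariant families of subspaces trivially (G Zariski connected and μ Zariski dense). Then for every proper subspace U of V, ν(ℙ(U)) = 0. -/
open MeasureTheory ENNReal

variable {V : Type*} [NormedAddCommGroup V] [NormedSpace ℝ V]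

noncomputable instance {V : Type*} [NormedAddCommGroup V] [NormedSpace ℝ V]
    [MeasurableSpace V] : MeasurableSpace (Projectivization ℝ V) :=
  (inferInstance : MeasurableSpace {v : V // v ≠ 0}).map
    (Quotient.mk (projectivizationSetoid ℝ V))


section Aux

lemma aux_bind_apply' {α β : Type*} [MeasurableSpace α] [MeasurableSpace β]
    {μ : Measure α} {f : α → Measure β} (hf : AEMeasurable f μ) {s : Set β}
    (hs : MeasurableSet s) : μ.bind f s = ∫⁻ a, f a s ∂μ := by
  rw [Measure.bind, Measure.join_apply hs,
    lintegral_map' (Measure.measurable_coe hs).aemeasurable hf]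

lemma aux_aemeasurable_of_bind {α β : Type*} [MeasurableSpace α] [MeasurableSpace β]
    {μ : Measure α} {f : α → Measure β} {ν : Measure β} [IsProbabilityMeasure ν]
    (h : μ.bind f = ν) : AEMeasurable f μ := by
  by_contra hf
  rw [Measure.bind, Measure.map_of_not_aemeasurable hf, Measure.join_zero] at h
  have := measure_univ (μ := ν)
  rw [← h] at this
  simp at this

lemma aux_ae_eq_of_lintegral_eq {α : Type*} [MeasurableSpace α] {μ : Measure α}
    [IsProbabilityMeasure μ] {f : α → ℝ≥0∞} {c : ℝ≥0∞} (hf : AEMeasurable f μ)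
    (hle : ∀ a, f a ≤ c) (hc : c ≠ ⊤) (hint : ∫⁻ a, f a ∂μ = c) :
    ∀ᵐ a ∂μ, f a = c := by
  have hfin : ∫⁻ a, f a ∂μ ≠ ⊤ := hint ▸ hc
  have hsub : ∫⁻ a, (c - f a) ∂μ = 0 := by
    rw [lintegral_sub' hf hfin (Filter.Eventually.of_forall hle), hint,
      lintegral_const, measure_univ, mul_one, tsub_self]
  have h0 := (lintegral_eq_zero_iff' (aemeasurable_const.sub hf)).1 hsub
  filter_upwards [h0] with a ha
  exact le_antisymm (hle a) (tsub_eq_zero_iff_le.1 ha)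

end Aux

lemma aux_mk_measurable [MeasurableSpace V] :
    Measurable (Quotient.mk (projectivizationSetoid ℝ V)) :=
  fun _ hs => hs

lemma aux_submodule_map (f : V →ₗ[ℝ] V) (hf : Function.Injective f)
    (x : Projectivization ℝ V) :
    (Projectivization.map f hf x).submodule = x.submodule.map f := by
  induction x using Projectivization.ind with
  | h v hv =>
    rw [Projectivization.map_mk, Projectivization.submodule_mk,
      Projectivization.submodule_mk, Submodule.map_span, Set.image_singleton]

lemma aux_set_meas [MeasurableSpace V] [BorelSpace V] [FiniteDimensional ℝ V]
    (U : Submodule ℝ V) :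
    MeasurableSet {x : Projectivization ℝ V | x.submodule ≤ U} := by
  show MeasurableSet
    (Quotient.mk (projectivizationSetoid ℝ V) ⁻¹' {x : Projectivization ℝ V | x.submodule ≤ U})
  have : (Quotient.mk (projectivizationSetoid ℝ V) ⁻¹' {x : Projectivization ℝ V | x.submodule ≤ U}) =
      (Subtype.val ⁻¹' (U : Set V)) := by
    ext v
    have : (Quotient.mk (projectivizationSetoid ℝ V) v) =
        Projectivization.mk ℝ v.1 v.2 := rfl
    simp only [Set.mem_preimage, Set.mem_setOf_eq, this,
      Projectivization.submodule_mk, SetLike.mem_coe]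
    exact ⟨fun h => h (Submodule.mem_span_singleton_self _),
      fun h => (Submodule.span_singleton_le_iff_mem _ _).2 h⟩
  rw [this]
  exact (U.closed_of_finiteDimensional.measurableSet).preimage measurable_subtype_coe

lemma aux_map_measurable [MeasurableSpace V] [BorelSpace V] [FiniteDimensional ℝ V]
    (f : V →ₗ[ℝ] V) (hf : Function.Injective f) :
    Measurable (Projectivization.map f hf) := by
  intro s hs
  show MeasurableSet
    (Quotient.mk (projectivizationSetoid ℝ V) ⁻¹' (Projectivization.map f hf ⁻¹' s))
  have key : (Quotient.mk (projectivizationSetoid ℝ V) ∘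
      fun v : {v : V // v ≠ 0} => v) ⁻¹' (Projectivization.map f hf ⁻¹' s) =
      ((fun v : {v : V // v ≠ 0} =>
        (⟨f v.1, fun h => v.2 (hf (h.trans (map_zero f).symm))⟩ : {v : V // v ≠ 0})) ⁻¹'
        (Quotient.mk (projectivizationSetoid ℝ V) ⁻¹' s)) := by
    ext v
    simp only [Set.mem_preimage, Function.comp_apply]
    have h1 : (Quotient.mk (projectivizationSetoid ℝ V) v) =
        Projectivization.mk ℝ v.1 v.2 := rfl
    have h2 : (Quotient.mk (projectivizationSetoid ℝ V)
        (⟨f v.1, fun h => v.2 (hf (h.trans (map_zero f).symm))⟩ : {v : V // v ≠ 0})) =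
        Projectivization.mk ℝ (f v.1) (fun h => v.2 (hf (h.trans (map_zero f).symm))) := rfl
    exact Iff.rfl
  have hcont : Measurable fun v : {v : V // v ≠ 0} =>
      (⟨f v.1, fun h => v.2 (hf (h.trans (map_zero f).symm))⟩ : {v : V // v ≠ 0}) :=
    Measurable.subtype_mk ((f.continuous_of_finiteDimensional).measurable.comp
      measurable_subtype_coe)
  have hk := hcont (aux_mk_measurable hs)
  rw [← key] at hk
  exact hk

/-- A stationary measure on `ℙ(V)` giving zero mass to `ℙ(W)`, where `W` is the
unique proper nonzero invariant subspace and finite invariant families of subspaces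
are fixed elementwise, gives zero mass to `ℙ(U)` for every proper subspace `U`. -/
theorem stationary_measure_null_on_proper_subspaces
    {V : Type*} [NormedAddCommGroup V] [NormedSpace ℝ V] [FiniteDimensional ℝ V]
    [MeasurableSpace V] [BorelSpace V]
    {G : Type*} [Group G] [MeasurableSpace G]
    (ρ : G →* (V ≃ₗ[ℝ] V))
    (μ : Measure G) [IsProbabilityMeasure μ]
    (ν : Measure (Projectivization ℝ V)) [IsProbabilityMeasure ν]
    -- `ν` is `μ`-stationary
    (hstat : μ.bind (fun g => ν.map
      (Projectivization.map ((ρ g : V ≃ₗ[ℝ] V) : V →ₗ[ℝ] V) (ρ g).injective)) = ν)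
    -- the only proper nonzero `G`-invariant subspace of `V` is `W`
    (W : Submodule ℝ V)
    (honly : ∀ U : Submodule ℝ V, U ≠ ⊥ → U ≠ ⊤ →
      (∀ g : G, U.map ((ρ g : V ≃ₗ[ℝ] V) : V →ₗ[ℝ] V) = U) → U = W)
    -- `ν(ℙ(W)) = 0`
    (hW : ν {x : Projectivization ℝ V | x.submodule ≤ W} = 0)
    -- consequence of Zariski connectedness of `G` and Zariski density of `μ`:
    -- any finite family of subspaces permuted by `μ`-a.e. `g` is fixed elementwise
    -- by all of `G`
    (hperm : ∀ F : Set (Submodule ℝ V), F.Finite → F.Nonempty →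
      (∀ᵐ g ∂μ, (fun U : Submodule ℝ V =>
          U.map ((ρ g : V ≃ₗ[ℝ] V) : V →ₗ[ℝ] V)) '' F = F) →
      ∀ U ∈ F, ∀ g : G, U.map ((ρ g : V ≃ₗ[ℝ] V) : V →ₗ[ℝ] V) = U) :
    ∀ U : Submodule ℝ V, U ≠ ⊤ →
      ν {x : Projectivization ℝ V | x.submodule ≤ U} = 0 := by
  
  classical
  intro Ufull hUtop
  by_contra hU0
  set m : Submodule ℝ V → ℝ≥0∞ :=
    fun U => ν {x : Projectivization ℝ V | x.submodule ≤ U} with hm_def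
  have hbot : m ⊥ = 0 := by
    have hempty : {x : Projectivization ℝ V | x.submodule ≤ ⊥} = ∅ := by
      ext x
      simp only [Set.mem_setOf_eq, le_bot_iff, Set.mem_empty_iff_false, iff_false]
      intro h
      rw [Projectivization.submodule_eq, Submodule.span_singleton_eq_bot] at h
      exact x.rep_nonzero h
    calc m ⊥ = ν {x : Projectivization ℝ V | x.submodule ≤ ⊥} := rfl
      _ = ν (∅ : Set (Projectivization ℝ V)) := by rw [hempty]
      _ = 0 := measure_empty
  have hex : ∃ r : ℕ, ∃ U : Submodule ℝ V, Module.finrank ℝ U = r ∧ m U ≠ 0 :=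
    ⟨_, Ufull, rfl, hU0⟩
  set r₀ := Nat.find hex with hr₀_def
  obtain ⟨Uw, hUwrank, hUw0⟩ := Nat.find_spec hex
  have hmin : ∀ U : Submodule ℝ V, Module.finrank ℝ U < r₀ → m U = 0 := by
    intro U h
    by_contra h'
    exact Nat.find_min hex h ⟨U, rfl, h'⟩
  have hr₀lt : r₀ < Module.finrank ℝ V :=
    lt_of_le_of_lt (Nat.find_min' hex ⟨Ufull, rfl, hU0⟩)
      (Submodule.finrank_lt hUtop)
  -- pairwise a.e. disjointness
  have hinter : ∀ U₁ U₂ : Submodule ℝ V, Module.finrank ℝ U₁ = r₀ →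
      Module.finrank ℝ U₂ = r₀ → U₁ ≠ U₂ →
      ν ({x : Projectivization ℝ V | x.submodule ≤ U₁} ∩
        {x : Projectivization ℝ V | x.submodule ≤ U₂}) = 0 := by
    intro U₁ U₂ h1 h2 hne
    have hset : {x : Projectivization ℝ V | x.submodule ≤ U₁} ∩
        {x : Projectivization ℝ V | x.submodule ≤ U₂} =
        {x : Projectivization ℝ V | x.submodule ≤ U₁ ⊓ U₂} := by
      ext x
      simp [le_inf_iff]
    rw [hset]
    apply hmin
    have hle : Module.finrank ℝ (U₁ ⊓ U₂ : Submodule ℝ V) ≤ r₀ :=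
      h1 ▸ Submodule.finrank_mono inf_le_left
    rcases lt_or_eq_of_le hle with h | h
    · exact h
    · exfalso
      have e1 : (U₁ ⊓ U₂ : Submodule ℝ V) = U₁ :=
        Submodule.eq_of_le_of_finrank_le inf_le_left (by rw [h, h1])
      have e2 : (U₁ ⊓ U₂ : Submodule ℝ V) = U₂ :=
        Submodule.eq_of_le_of_finrank_le inf_le_right (by rw [h, h2])
      exact hne (e1 ▸ e2)
  -- finiteness of large-mass subspaces
  have hfin : ∀ ε : ℝ≥0∞, 0 < ε →
      {U : Submodule ℝ V | Module.finrank ℝ U = r₀ ∧ ε ≤ m U}.Finite := by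
    intro ε hε
    have hfin' := MeasureTheory.Measure.finite_const_le_meas_of_disjoint_iUnion₀ ν hε
      (As := fun U : {U : Submodule ℝ V // Module.finrank ℝ U = r₀} =>
        {x : Projectivization ℝ V | x.submodule ≤ U.1})
      (fun U => (aux_set_meas U.1).nullMeasurableSet)
      (fun U₁ U₂ hne => hinter U₁.1 U₂.1 U₁.2 U₂.2 (fun h => hne (Subtype.ext h)))
      (measure_ne_top ν _)
    have himg : {U : Submodule ℝ V | Module.finrank ℝ U = r₀ ∧ ε ≤ m U} =
        Subtype.val '' {U : {U : Submodule ℝ V // Module.finrank ℝ U = r₀} |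
          ε ≤ ν {x : Projectivization ℝ V | x.submodule ≤ U.1}} := by
      ext U
      constructor
      · rintro ⟨h1, h2⟩
        exact ⟨⟨U, h1⟩, h2, rfl⟩
      · rintro ⟨⟨U', h1⟩, h2, rfl⟩
        exact ⟨h1, h2⟩
    rw [himg]
    exact hfin'.image _
  set S := {U : Submodule ℝ V | Module.finrank ℝ U = r₀} with hS_def
  set α := sSup (m '' S) with hα_def
  have hαpos : 0 < α :=
    lt_of_lt_of_le (pos_iff_ne_zero.2 hUw0) (le_sSup ⟨Uw, hUwrank, rfl⟩)
  have hα1 : α ≤ 1 := by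
    apply sSup_le
    rintro b ⟨U, -, rfl⟩
    exact prob_le_one
  have hαtop : α ≠ ⊤ := ne_top_of_le_ne_top one_ne_top hα1
  have hhalfpos : 0 < α / 2 := ENNReal.half_pos hαpos.ne'
  have hhalflt : α / 2 < α := ENNReal.half_lt_self hαpos.ne' hαtop
  set T := {U : Submodule ℝ V | Module.finrank ℝ U = r₀ ∧ α / 2 ≤ m U} with hT_def
  have hTfin : T.Finite := hfin _ hhalfpos
  have hTne : T.Nonempty := by
    obtain ⟨b, ⟨U, hUS, rfl⟩, hb⟩ := lt_sSup_iff.1 hhalflt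
    exact ⟨U, hUS, hb.le⟩
  obtain ⟨Um, hUmT, hUmmax⟩ := hTfin.exists_maximalFor m T hTne
  have hUmge : ∀ U ∈ T, m U ≤ m Um := by
    intro U hU
    rcases le_total (m U) (m Um) with h | h
    · exact h
    · exact hUmmax hU h
  have hUmα : m Um = α := by
    refine le_antisymm (le_sSup ⟨Um, hUmT.1, rfl⟩) (sSup_le ?_)
    rintro b ⟨U, hUS, rfl⟩
    rcases le_total (α / 2) (m U) with h | h
    · exact hUmge U ⟨hUS, h⟩
    · exact h.trans hUmT.2
  set F := {U : Submodule ℝ V | Module.finrank ℝ U = r₀ ∧ m U = α} with hF_def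
  have hFT : F ⊆ T := fun U hU => ⟨hU.1, hU.2 ▸ hhalflt.le⟩
  have hFfin : F.Finite := hTfin.subset hFT
  have hFne : F.Nonempty := ⟨Um, hUmT.1, hUmα⟩
  -- stationarity
  have hmble : AEMeasurable (fun g => ν.map
      (Projectivization.map ((ρ g : V ≃ₗ[ℝ] V) : V →ₗ[ℝ] V) (ρ g).injective)) μ :=
    aux_aemeasurable_of_bind hstat
  have hpre : ∀ (g : G) (U : Submodule ℝ V),
      ν.map (Projectivization.map ((ρ g : V ≃ₗ[ℝ] V) : V →ₗ[ℝ] V) (ρ g).injective)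
        {x : Projectivization ℝ V | x.submodule ≤ U} =
      m (U.comap ((ρ g : V ≃ₗ[ℝ] V) : V →ₗ[ℝ] V)) := by
    intro g U
    rw [Measure.map_apply (aux_map_measurable _ _) (aux_set_meas U)]
    congr 1
    ext x
    simp only [Set.mem_preimage, Set.mem_setOf_eq, aux_submodule_map,
      Submodule.map_le_iff_le_comap]
  have hkey : ∀ U : Submodule ℝ V,
      m U = ∫⁻ g, m (U.comap ((ρ g : V ≃ₗ[ℝ] V) : V →ₗ[ℝ] V)) ∂μ := by
    intro U
    have h1 : m U = μ.bind (fun g => ν.map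
        (Projectivization.map ((ρ g : V ≃ₗ[ℝ] V) : V →ₗ[ℝ] V) (ρ g).injective))
        {x : Projectivization ℝ V | x.submodule ≤ U} := by
      rw [hstat]
    rw [h1, aux_bind_apply' hmble (aux_set_meas U)]
    exact lintegral_congr fun g => hpre g U
  have hcomap_rank : ∀ (g : G) (U : Submodule ℝ V),
      Module.finrank ℝ (U.comap ((ρ g : V ≃ₗ[ℝ] V) : V →ₗ[ℝ] V)) = Module.finrank ℝ U := by
    intro g U
    rw [Submodule.comap_equiv_eq_map_symm, LinearEquiv.finrank_map_eq]
  have hae : ∀ U ∈ F, ∀ᵐ g ∂μ,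
      U.comap ((ρ g : V ≃ₗ[ℝ] V) : V →ₗ[ℝ] V) ∈ F := by
    intro U hU
    have hb : ∀ g : G, m (U.comap ((ρ g : V ≃ₗ[ℝ] V) : V →ₗ[ℝ] V)) ≤ α := fun g =>
      le_sSup ⟨_, (hcomap_rank g U).trans hU.1, rfl⟩
    have hint : ∫⁻ g, m (U.comap ((ρ g : V ≃ₗ[ℝ] V) : V →ₗ[ℝ] V)) ∂μ = α := by
      rw [← hkey U, hU.2]
    have hmeas : AEMeasurable
        (fun g => m (U.comap ((ρ g : V ≃ₗ[ℝ] V) : V →ₗ[ℝ] V))) μ := by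
      have heq : (fun g => m (U.comap ((ρ g : V ≃ₗ[ℝ] V) : V →ₗ[ℝ] V))) =
          fun g => ν.map (Projectivization.map ((ρ g : V ≃ₗ[ℝ] V) : V →ₗ[ℝ] V)
            (ρ g).injective) {x : Projectivization ℝ V | x.submodule ≤ U} := by
        funext g
        exact (hpre g U).symm
      rw [heq]
      exact (Measure.measurable_coe (aux_set_meas U)).comp_aemeasurable hmble
    filter_upwards [aux_ae_eq_of_lintegral_eq hmeas hb hαtop hint] with g hg
    exact ⟨(hcomap_rank g U).trans hU.1, hg⟩
  have hae2 : ∀ᵐ g ∂μ, ∀ U ∈ F, U.comap ((ρ g : V ≃ₗ[ℝ] V) : V →ₗ[ℝ] V) ∈ F :=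
    (ae_ball_iff hFfin.countable).2 hae
  have hae3 : ∀ᵐ g ∂μ, (fun U : Submodule ℝ V =>
      U.map ((ρ g : V ≃ₗ[ℝ] V) : V →ₗ[ℝ] V)) '' F = F := by
    filter_upwards [hae2] with g hg
    have hsurj : Function.Surjective ((ρ g : V ≃ₗ[ℝ] V) : V →ₗ[ℝ] V) := (ρ g).surjective
    have hsub : (fun U : Submodule ℝ V =>
        U.comap ((ρ g : V ≃ₗ[ℝ] V) : V →ₗ[ℝ] V)) '' F ⊆ F := by
      rintro _ ⟨U, hU, rfl⟩
      exact hg U hU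
    have hinj : Function.Injective (fun U : Submodule ℝ V =>
        U.comap ((ρ g : V ≃ₗ[ℝ] V) : V →ₗ[ℝ] V)) := by
      intro a b h
      have h' := congrArg (Submodule.map ((ρ g : V ≃ₗ[ℝ] V) : V →ₗ[ℝ] V)) h
      rwa [Submodule.map_comap_eq_of_surjective hsurj,
        Submodule.map_comap_eq_of_surjective hsurj] at h'
    have heq : (fun U : Submodule ℝ V =>
        U.comap ((ρ g : V ≃ₗ[ℝ] V) : V →ₗ[ℝ] V)) '' F = F :=
      Set.eq_of_subset_of_ncard_le hsub
        (by rw [Set.ncard_image_of_injective _ hinj]) hFfin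
    calc (fun U : Submodule ℝ V => U.map ((ρ g : V ≃ₗ[ℝ] V) : V →ₗ[ℝ] V)) '' F
        = (fun U : Submodule ℝ V => U.map ((ρ g : V ≃ₗ[ℝ] V) : V →ₗ[ℝ] V)) ''
          ((fun U : Submodule ℝ V => U.comap ((ρ g : V ≃ₗ[ℝ] V) : V →ₗ[ℝ] V)) '' F) := by
          rw [heq]
      _ = F := by
          rw [← Set.image_comp]
          have hid : ((fun U : Submodule ℝ V => U.map ((ρ g : V ≃ₗ[ℝ] V) : V →ₗ[ℝ] V)) ∘
              (fun U : Submodule ℝ V => U.comap ((ρ g : V ≃ₗ[ℝ] V) : V →ₗ[ℝ] V))) = id := by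
            funext U
            exact Submodule.map_comap_eq_of_surjective hsurj U
          rw [hid, Set.image_id]
  have hallinv := hperm F hFfin hFne hae3 Um ⟨hUmT.1, hUmα⟩
  have hUmbot : Um ≠ ⊥ := by
    intro h
    rw [h, hbot] at hUmα
    exact hαpos.ne' hUmα.symm
  have hUmtop : Um ≠ ⊤ := by
    intro h
    have := hUmT.1
    rw [h, finrank_top] at this
    exact absurd (this ▸ hr₀lt) (lt_irrefl _)
  have hUmW := honly Um hUmbot hUmtop hallinv
  rw [hUmW] at hUmα
  have hmW : m W = 0 := hW
  exact hαpos.ne' (hUmα.symm.trans hmW)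
end
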